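/- Let K₁, K₂ > 0, α ∈ (1/2, 1), λ > 0, set ε = (2K₂²(1+α²) + 2K₁²(1−α)²)/(3−2α) and C = min{2α−1, (3−2α)/4}. Let u ∈ C²([0,1]) with u(0) = u'(0) = 0, v ∈ C¹([0,1]), and a, b ∈ ℝ. Define E = ½∫₀¹ v² dx + ½∫₀¹ u''² dx + ½∫₀¹ v'² dx. Then −λ(½+α)∫₀¹ v² dx − λ(α−½)∫₀¹ v'² dx − λ(3/2−α)∫₀¹ u''² dx + λ(−K₂ u'(1) a + K₂ α u(1) a − K₁(1−α) u'(1) b) ≤ −λ C E + λ ε a² + (λε/2) b². -/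

import Mathlib

lemma cs_interval (f : ℝ → ℝ) (hf : Continuous f) (x : ℝ) (hx : 0 ≤ x) :
    (∫ t in (0:ℝ)..x, f t) ^ 2 ≤ x * ∫ t in (0:ℝ)..x, (f t) ^ 2 := by
  rcases eq_or_lt_of_le hx with h | h
  · simp [← h]
  · set I := ∫ t in (0:ℝ)..x, f t with hI
    set c : ℝ := I / x with hc
    have h0 : 0 ≤ ∫ t in (0:ℝ)..x, (f t - c) ^ 2 :=
      intervalIntegral.integral_nonneg hx (fun t _ => sq_nonneg _)
    have hexp : ∀ t : ℝ, (f t - c) ^ 2 = (f t) ^ 2 - 2 * c * f t + c ^ 2 := by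
      intro t; ring
    have hint1 : IntervalIntegrable (fun t => (f t) ^ 2) MeasureTheory.volume 0 x :=
      (hf.pow 2).intervalIntegrable 0 x
    have hint2 : IntervalIntegrable (fun t => 2 * c * f t) MeasureTheory.volume 0 x :=
      (continuous_const.mul hf).intervalIntegrable 0 x
    have hint3 : IntervalIntegrable (fun _ : ℝ => c ^ 2) MeasureTheory.volume 0 x :=
      intervalIntegrable_const
    have heq : (∫ t in (0:ℝ)..x, (f t - c) ^ 2)
        = (∫ t in (0:ℝ)..x, (f t) ^ 2) - 2 * c * I + c ^ 2 * x := by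
      simp_rw [hexp]
      rw [intervalIntegral.integral_add (hint1.sub hint2) hint3,
        intervalIntegral.integral_sub hint1 hint2,
        intervalIntegral.integral_const_mul]
      simp [mul_comm]
      exact Or.inl hI.symm
    rw [heq] at h0
    have hx0 : x ≠ 0 := ne_of_gt h
    rw [hc] at h0
    have hxx : I / x * x = I := div_mul_cancel₀ I hx0
    nlinarith [mul_nonneg (le_of_lt h) h0, hxx, sq_nonneg (I/x)]

/-- Combined multiplier estimate: with ε = (2K₂²(1+α²)+2K₁²(1−α)²)/(3−2α) and
C = min{2α−1, (3−2α)/4}, the sum 𝒜 = 𝒜₁+...+𝒜₅ of the interior and boundary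
multiplier terms satisfies 𝒜 ≤ −λCE + λεa² + (λε/2)b². -/
theorem stmt_12 (K₁ K₂ α lam ε C : ℝ) (hK₁ : 0 < K₁) (hK₂ : 0 < K₂)
    (hα : 1/2 < α ∧ α < 1) (hlam : 0 < lam)
    (hε : ε = (2 * K₂ ^ 2 * (1 + α ^ 2) + 2 * K₁ ^ 2 * (1 - α) ^ 2) / (3 - 2 * α))
    (hC : C = min (2 * α - 1) ((3 - 2 * α) / 4))
    (u v : ℝ → ℝ) (hu : ContDiff ℝ 2 u) (hu0 : u 0 = 0) (hu0' : deriv u 0 = 0)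
    (hv : ContDiff ℝ 1 v) (a b E : ℝ)
    (hE : E = (1/2) * (∫ x in (0:ℝ)..1, (v x) ^ 2)
        + (1/2) * (∫ x in (0:ℝ)..1, (deriv (deriv u) x) ^ 2)
        + (1/2) * (∫ x in (0:ℝ)..1, (deriv v x) ^ 2)) :
    -lam * (1/2 + α) * (∫ x in (0:ℝ)..1, (v x) ^ 2)
      - lam * (α - 1/2) * (∫ x in (0:ℝ)..1, (deriv v x) ^ 2)
      - lam * (3/2 - α) * (∫ x in (0:ℝ)..1, (deriv (deriv u) x) ^ 2)
      + lam * (-K₂ * deriv u 1 * a + K₂ * α * u 1 * a - K₁ * (1 - α) * deriv u 1 * b)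
    ≤ -lam * C * E + lam * ε * a ^ 2 + (lam * ε / 2) * b ^ 2 := by
  obtain ⟨hα1, hα2⟩ := hα
  have h3 : (0:ℝ) < 3 - 2 * α := by linarith
  -- regularity
  have hu2 : ContDiff ℝ ((1:ℕ) + 1) u := by exact_mod_cast hu
  obtain ⟨hud, -, hu1c⟩ := contDiff_succ_iff_deriv.mp hu2
  have hcu' : Continuous (deriv u) := hu1c.continuous
  have hcu'' : Continuous (deriv (deriv u)) := hu1c.continuous_deriv le_rfl
  have hdu' : Differentiable ℝ (deriv u) := hu1c.differentiable (by simp)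
  -- abbreviations
  set I1 := ∫ x in (0:ℝ)..1, (v x) ^ 2 with hI1def
  set I2 := ∫ x in (0:ℝ)..1, (deriv (deriv u) x) ^ 2 with hI2def
  set I3 := ∫ x in (0:ℝ)..1, (deriv v x) ^ 2 with hI3def
  have hI1 : 0 ≤ I1 := intervalIntegral.integral_nonneg (by norm_num) (fun t _ => sq_nonneg _)
  have hI2 : 0 ≤ I2 := intervalIntegral.integral_nonneg (by norm_num) (fun t _ => sq_nonneg _)
  have hI3 : 0 ≤ I3 := intervalIntegral.integral_nonneg (by norm_num) (fun t _ => sq_nonneg _)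
  -- FTC for deriv u at each x
  have hftc : ∀ x : ℝ, 0 ≤ x → deriv u x = ∫ t in (0:ℝ)..x, deriv (deriv u) t := by
    intro x hx
    have := intervalIntegral.integral_deriv_eq_sub (f := deriv u)
      (fun t _ => hdu' t) (hcu''.intervalIntegrable 0 x)
    rw [this, hu0']; ring
  -- bound on (deriv u 1)^2
  have hD2 : (deriv u 1) ^ 2 ≤ I2 := by
    have h := cs_interval (deriv (deriv u)) hcu'' 1 (by norm_num)
    rw [hftc 1 (by norm_num)]
    simpa using h
  -- pointwise bound on (deriv u x)^2 for x ∈ [0,1]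
  have hpt : ∀ x ∈ Set.Icc (0:ℝ) 1, (deriv u x) ^ 2 ≤ I2 := by
    intro x hx
    obtain ⟨hx0, hx1⟩ := hx
    have h := cs_interval (deriv (deriv u)) hcu'' x hx0
    have hsplit : (∫ t in (0:ℝ)..x, (deriv (deriv u) t) ^ 2)
        + (∫ t in x..(1:ℝ), (deriv (deriv u) t) ^ 2) = I2 :=
      intervalIntegral.integral_add_adjacent_intervals
        ((hcu''.pow 2).intervalIntegrable 0 x) ((hcu''.pow 2).intervalIntegrable x 1)
    have htail : 0 ≤ ∫ t in x..(1:ℝ), (deriv (deriv u) t) ^ 2 :=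
      intervalIntegral.integral_nonneg hx1 (fun t _ => sq_nonneg _)
    have hpart : 0 ≤ ∫ t in (0:ℝ)..x, (deriv (deriv u) t) ^ 2 :=
      intervalIntegral.integral_nonneg hx0 (fun t _ => sq_nonneg _)
    rw [hftc x hx0]
    nlinarith [h]
  -- bound on (u 1)^2
  have hU2 : (u 1) ^ 2 ≤ I2 := by
    have hftcu : u 1 = ∫ t in (0:ℝ)..1, deriv u t := by
      have := intervalIntegral.integral_deriv_eq_sub (f := u)
        (fun t _ => hud t) (hcu'.intervalIntegrable 0 1)
      rw [this, hu0]; ring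
    have h := cs_interval (deriv u) hcu' 1 (by norm_num)
    have hmono : (∫ t in (0:ℝ)..1, (deriv u t) ^ 2) ≤ ∫ _ in (0:ℝ)..1, I2 :=
      intervalIntegral.integral_mono_on (by norm_num)
        ((hcu'.pow 2).intervalIntegrable 0 1) intervalIntegrable_const hpt
    simp only [intervalIntegral.integral_const, smul_eq_mul, sub_zero, one_mul] at hmono
    rw [hftcu]
    nlinarith [h]
  -- Young's inequality for the boundary terms
  have hεpos : 0 < ε := by
    have hnum : 0 < 2 * K₂ ^ 2 * (1 + α ^ 2) + 2 * K₁ ^ 2 * (1 - α) ^ 2 := by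
      nlinarith [mul_pos hK₂ hK₂, sq_nonneg α, mul_nonneg (mul_pos hK₁ hK₁).le (sq_nonneg (1 - α))]
    rw [hε]; exact div_pos hnum h3
  set D := deriv u 1
  set U := u 1
  have hM : K₂ ^ 2 + K₂ ^ 2 * α ^ 2 + K₁ ^ 2 * (1 - α) ^ 2 = ε * (3 - 2 * α) / 2 := by
    rw [hε, div_mul_cancel₀ _ h3.ne']; ring
  have hid : 2 * ε * ((3 - 2 * α) / 4 * I2 + ε * a ^ 2 + ε / 2 * b ^ 2)
      - 2 * ε * (-K₂ * D * a + K₂ * α * U * a - K₁ * (1 - α) * D * b)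
      = (ε * a + K₂ * D) ^ 2 + (ε * a - K₂ * α * U) ^ 2 + (ε * b + K₁ * (1 - α) * D) ^ 2
        + K₂ ^ 2 * (I2 - D ^ 2) + K₂ ^ 2 * α ^ 2 * (I2 - U ^ 2)
        + K₁ ^ 2 * (1 - α) ^ 2 * (I2 - D ^ 2) := by
    linear_combination -(I2 * hM)
  have key2 : 2 * ε * (-K₂ * D * a + K₂ * α * U * a - K₁ * (1 - α) * D * b)
      ≤ 2 * ε * ((3 - 2 * α) / 4 * I2 + ε * a ^ 2 + ε / 2 * b ^ 2) := by
    linarith [hid, sq_nonneg (ε * a + K₂ * D), sq_nonneg (ε * a - K₂ * α * U),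
      sq_nonneg (ε * b + K₁ * (1 - α) * D),
      mul_nonneg (sq_nonneg K₂) (sub_nonneg.2 hD2),
      mul_nonneg (mul_nonneg (sq_nonneg K₂) (sq_nonneg α)) (sub_nonneg.2 hU2),
      mul_nonneg (mul_nonneg (sq_nonneg K₁) (sq_nonneg (1 - α))) (sub_nonneg.2 hD2)]
  have key : -K₂ * D * a + K₂ * α * U * a - K₁ * (1 - α) * D * b
      ≤ (3 - 2 * α) / 4 * I2 + ε * a ^ 2 + ε / 2 * b ^ 2 :=
    le_of_mul_le_mul_left key2 (by positivity : (0:ℝ) < 2 * ε)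
  -- combine
  have hC1 : C ≤ 2 * α - 1 := hC ▸ min_le_left _ _
  have hC2 : C ≤ (3 - 2 * α) / 4 := hC ▸ min_le_right _ _
  have hkey' : lam * (-K₂ * D * a + K₂ * α * U * a - K₁ * (1 - α) * D * b)
      ≤ lam * ((3 - 2 * α) / 4 * I2 + ε * a ^ 2 + ε / 2 * b ^ 2) :=
    mul_le_mul_of_nonneg_left key hlam.le
  rw [hE]
  linarith [hkey',
    mul_nonneg (mul_nonneg hlam.le (by linarith : (0:ℝ) ≤ 2 * α - 1 - C)) hI1,
    mul_nonneg (mul_nonneg hlam.le (by linarith : (0:ℝ) ≤ 2 * α - 1 - C)) hI3,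
    mul_nonneg (mul_nonneg hlam.le (by linarith : (0:ℝ) ≤ (3 - 2 * α) / 2 - C)) hI2,
    mul_nonneg hlam.le hI1, mul_nonneg hlam.le hI2, mul_nonneg hlam.le hI3]
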